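/- Under the stated assumptions, for all ℓ, h ∈ (0,1], ∫_{−∞}^{∞} E(|δ_{ℓ,h}(x)|) dx ≤ ∫_{b(I_ε)} E(|𝔟̂_h⁻¹(z) − b⁻¹(z)|) dz, where δ_{ℓ,h}(x) = ∫_{b(r_ε)}^{b(l_ε)} ∫_{−∞}^{−x} ( K_ℓ(−𝔟̂_h⁻¹(z) − y) − K_ℓ(−b⁻¹(z) − y) ) dy dz. -/

import Mathlib

open MeasureTheory

/-- The rescaled kernel `K_η(x) = η⁻¹ K(x/η)`. -/
noncomputable def Kh (K : ℝ → ℝ) (η x : ℝ) : ℝ := η⁻¹ * K (x / η)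

/-- The estimator `𝔟̂_h⁻¹(w) = l₀ - 2ε + ∫_{I_{2ε}} ∫_{-∞}^{-w} K_h(-g(z) - y) dy dz`
of the inverse of `b`, computed from an estimation `g` of `b`. -/
noncomputable def binvEst (K : ℝ → ℝ) (l₀ r₀ ε h : ℝ) (g : ℝ → ℝ) (w : ℝ) : ℝ :=
  (l₀ - 2 * ε) +
    ∫ z in Set.Icc (l₀ - 2 * ε) (r₀ + 2 * ε), ∫ y in Set.Iic (-w), Kh K h (-(g z) - y)

open Set
open scoped ENNReal

section aux

lemma shift_Iic (f : ℝ → ℝ) (c d : ℝ) :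
    ∫ y in Set.Iic c, f (d - y) = ∫ u in Set.Ici (d - c), f u := by
  have h1 : ∫ y in Set.Iic c, f (d - y) = ∫ y in Set.Iic c, (fun t => f (d + t)) (-y) := by
    apply setIntegral_congr_fun measurableSet_Iic
    intro y _; simp [sub_eq_add_neg]
  have h2 := integral_comp_neg_Iic c (fun t => f (d + t))
  rw [h1, h2, ← integral_Ici_eq_integral_Ioi]
  have A : MeasurableEmbedding (fun x : ℝ => x + d) :=
    (Homeomorph.addRight d).isClosedEmbedding.measurableEmbedding
  have key := MeasurableEmbedding.setIntegral_map (μ := volume) A f (Ici (d - c))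
  rw [map_add_right_eq_self (volume : Measure ℝ) d] at key
  have hs : ((fun x : ℝ => x + d) ⁻¹' Set.Ici (d - c)) = Set.Ici (-c) := by
    ext t; simp only [Set.mem_preimage, Set.mem_Ici]; constructor <;> intro h' <;> linarith
  rw [key, hs]
  apply setIntegral_congr_fun measurableSet_Ici
  intro t _; simp [add_comm]

variable {K : ℝ → ℝ} {η : ℝ}

lemma Kh_cont (hK : Continuous K) : Continuous (Kh K η) := by
  unfold Kh; fun_prop

lemma Kh_nonneg (hK0 : ∀ y, 0 ≤ K y) (hη : 0 < η) (x : ℝ) : 0 ≤ Kh K η x :=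
  mul_nonneg (by positivity) (hK0 _)

lemma Kh_integrable (hK : Continuous K) (hsupp : ∀ y, 1 < |y| → K y = 0) (hη : 0 < η) :
    Integrable (Kh K η) := by
  apply Continuous.integrable_of_hasCompactSupport (Kh_cont hK)
  apply HasCompactSupport.intro (isCompact_Icc (a := -η) (b := η))
  intro x hx
  simp only [Set.mem_Icc, not_and_or, not_le] at hx
  have h1 : 1 < |x / η| := by
    rw [abs_div, abs_of_pos hη, lt_div_iff₀ hη]
    rcases hx with hx | hx
    · rw [abs_of_neg (by linarith)]; linarith
    · rw [abs_of_pos (by linarith)]; linarith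
  simp [Kh, hsupp _ h1]

lemma Kh_integral (hKint : ∫ y, K y = 1) (hη : 0 < η) :
    ∫ x, Kh K η x = 1 := by
  unfold Kh
  rw [integral_const_mul, MeasureTheory.Measure.integral_comp_div K η, hKint]
  simp [abs_of_pos hη, inv_mul_cancel₀ (ne_of_gt hη)]

/-- `F_η(t) = ∫_{u ≥ t} K_η(u) du`. -/
noncomputable def Fk (K : ℝ → ℝ) (η t : ℝ) : ℝ := ∫ u in Set.Ici t, Kh K η u

lemma Fk_nonneg (hK0 : ∀ y, 0 ≤ K y) (hη : 0 < η) (t : ℝ) : 0 ≤ Fk K η t :=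
  setIntegral_nonneg measurableSet_Ici fun x _ => Kh_nonneg hK0 hη x

lemma Fk_sub (hint : Integrable (Kh K η)) {t s : ℝ} (hts : t ≤ s) :
    Fk K η t - Fk K η s = ∫ u in Set.Ico t s, Kh K η u := by
  have hu : Set.Ico t s ∪ Set.Ici s = Set.Ici t := Set.Ico_union_Ici_eq_Ici hts
  have hd : Disjoint (Set.Ico t s) (Set.Ici s) := by
    rw [Set.disjoint_left]; rintro u ⟨_, h2⟩ h3; exact absurd h3 (not_le.mpr h2)
  have key := setIntegral_union hd measurableSet_Ici hint.integrableOn hint.integrableOn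
    (f := Kh K η) (μ := volume)
  rw [hu] at key
  rw [Fk, Fk, key]; ring

lemma Fk_anti (hK0 : ∀ y, 0 ≤ K y) (hint : Integrable (Kh K η)) (hη : 0 < η) :
    Antitone (Fk K η) := by
  intro t s hts
  have h1 := Fk_sub hint hts
  have h2 : 0 ≤ ∫ u in Set.Ico t s, Kh K η u :=
    setIntegral_nonneg measurableSet_Ico fun x _ => Kh_nonneg hK0 hη x
  linarith

lemma Fk_le_one (hK0 : ∀ y, 0 ≤ K y) (hint : Integrable (Kh K η)) (hKint : ∫ y, K y = 1)
    (hη : 0 < η) (t : ℝ) : Fk K η t ≤ 1 := by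
  rw [← Kh_integral hKint hη]
  exact setIntegral_le_integral hint (Filter.Eventually.of_forall fun x => Kh_nonneg hK0 hη x)

lemma Fk_core_aux (hK : Continuous K) (hK0 : ∀ y, 0 ≤ K y) (hint : Integrable (Kh K η))
    (hKint : ∫ y, K y = 1) (hη : 0 < η) {a c : ℝ} (hca : c ≤ a) :
    ∫⁻ x, ENNReal.ofReal |Fk K η (x - a) - Fk K η (x - c)| ≤ ENNReal.ofReal (a - c) := by
  have hKm : Measurable (Kh K η) := (Kh_cont hK).measurable
  have habs : ∀ x : ℝ, ENNReal.ofReal |Fk K η (x - a) - Fk K η (x - c)|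
      = ∫⁻ u, ENNReal.ofReal (Kh K η u) * (Set.Ioc (u + c) (u + a)).indicator 1 x := by
    intro x
    have hle : x - a ≤ x - c := by linarith
    have h1 : |Fk K η (x - a) - Fk K η (x - c)| = Fk K η (x - a) - Fk K η (x - c) :=
      abs_of_nonneg (by linarith [Fk_anti hK0 hint hη hle])
    rw [h1, Fk_sub hint hle,
      ofReal_integral_eq_lintegral_ofReal hint.integrableOn
        (Filter.Eventually.of_forall fun u => Kh_nonneg hK0 hη u),
      ← lintegral_indicator measurableSet_Ico]
    congr 1
    ext u
    by_cases hu : u ∈ Set.Ico (x - a) (x - c)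
    · have hx : x ∈ Set.Ioc (u + c) (u + a) := by
        obtain ⟨h1', h2'⟩ := hu; constructor <;> [linarith; linarith]
      simp [hu, hx]
    · have hx : x ∉ Set.Ioc (u + c) (u + a) := by
        intro hx; exact hu ⟨by linarith [hx.2], by linarith [hx.1]⟩
      simp [hu, hx]
  simp_rw [habs]
  rw [lintegral_lintegral_swap]
  · have heval : ∀ u : ℝ, ∫⁻ x, ENNReal.ofReal (Kh K η u)
        * (Set.Ioc (u + c) (u + a)).indicator 1 x
        = ENNReal.ofReal (Kh K η u) * ENNReal.ofReal (a - c) := by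
      intro u
      rw [lintegral_const_mul _ (measurable_one.indicator measurableSet_Ioc),
        lintegral_indicator_one measurableSet_Ioc, Real.volume_Ioc]
      congr 1; ring_nf
    simp_rw [heval]
    rw [lintegral_mul_const _ (hKm.ennreal_ofReal),
      ← ofReal_integral_eq_lintegral_ofReal hint
        (Filter.Eventually.of_forall fun u => Kh_nonneg hK0 hη u),
      Kh_integral hKint hη]
    simp
  · have hS : MeasurableSet {q : ℝ × ℝ | q.2 + c < q.1 ∧ q.1 ≤ q.2 + a} := by
      exact MeasurableSet.inter
        (measurableSet_lt (f := fun q : ℝ × ℝ => q.2 + c) (g := fun q : ℝ × ℝ => q.1)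
          (by fun_prop) (by fun_prop))
        (measurableSet_le (f := fun q : ℝ × ℝ => q.1) (g := fun q : ℝ × ℝ => q.2 + a)
          (by fun_prop) (by fun_prop))
    have hunc : (Function.uncurry fun (x u : ℝ) => ENNReal.ofReal (Kh K η u)
          * (Set.Ioc (u + c) (u + a)).indicator 1 x)
        = fun p : ℝ × ℝ => ENNReal.ofReal (Kh K η p.2)
          * ({q : ℝ × ℝ | q.2 + c < q.1 ∧ q.1 ≤ q.2 + a}).indicator 1 p := by
      ext p
      by_cases hp : p.1 ∈ Set.Ioc (p.2 + c) (p.2 + a)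
      · have hp' : p ∈ {q : ℝ × ℝ | q.2 + c < q.1 ∧ q.1 ≤ q.2 + a} := ⟨hp.1, hp.2⟩
        simp [Function.uncurry, hp, hp']
      · have hp' : p ∉ {q : ℝ × ℝ | q.2 + c < q.1 ∧ q.1 ≤ q.2 + a} := fun h => hp ⟨h.1, h.2⟩
        simp [Function.uncurry, hp, hp']
    rw [hunc]
    exact (((hKm.comp measurable_snd).ennreal_ofReal).mul
      (measurable_one.indicator hS)).aemeasurable

lemma Fk_core (hK : Continuous K) (hK0 : ∀ y, 0 ≤ K y) (hint : Integrable (Kh K η))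
    (hKint : ∫ y, K y = 1) (hη : 0 < η) (a c : ℝ) :
    ∫⁻ x, ENNReal.ofReal |Fk K η (x - a) - Fk K η (x - c)| ≤ ENNReal.ofReal |a - c| := by
  rcases le_total c a with hca | hac
  · rw [abs_of_nonneg (by linarith)]
    exact Fk_core_aux hK hK0 hint hKint hη hca
  · rw [abs_of_nonpos (by linarith), neg_sub]
    have h2 := Fk_core_aux hK hK0 hint hKint hη (a := c) (c := a) hac
    have h3 : ∀ x : ℝ, ENNReal.ofReal |Fk K η (x - a) - Fk K η (x - c)|
        = ENNReal.ofReal |Fk K η (x - c) - Fk K η (x - a)| := fun x => by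
      rw [abs_sub_comm]
    calc ∫⁻ x, ENNReal.ofReal |Fk K η (x - a) - Fk K η (x - c)|
        = ∫⁻ x, ENNReal.ofReal |Fk K η (x - c) - Fk K η (x - a)| := lintegral_congr h3
      _ ≤ _ := h2

end aux

lemma main_aux {Ω : Type} [MeasurableSpace Ω] (P : Measure Ω) [IsProbabilityMeasure P]
    {K : ℝ → ℝ} {ℓ : ℝ} (hKc : Continuous K) (hK0 : ∀ y, 0 ≤ K y)
    (hKl_int : Integrable (Kh K ℓ)) (hKint : ∫ y, K y = 1) (hℓ0 : 0 < ℓ)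
    (A : Ω → ℝ → ℝ) (B' : ℝ → ℝ) (a₁ a₂ c₁ c₂ : ℝ) (ha12 : a₁ ≤ a₂) (hc : c₁ ≤ c₂)
    (hAmeas : Measurable (fun p : Ω × ℝ => A p.1 p.2)) (hB'meas : Measurable B')
    (hAmem : ∀ ω z, A ω z ∈ Set.Icc c₁ c₂) (hB'mem : ∀ z, B' z ∈ Set.Icc c₁ c₂) :
    (∫ x : ℝ, ∫ ω, |∫ z in Set.Ioc a₁ a₂,
        (Fk K ℓ (x - A ω z) - Fk K ℓ (x - B' z))| ∂P)
      ≤ ∫ z in Set.Icc a₁ a₂, ∫ ω, |A ω z - B' z| ∂P := by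
  set S : Set ℝ := Set.Icc a₁ a₂ with hSdef
  set δ : Ω → ℝ → ℝ := fun ω x => ∫ z in Set.Ioc a₁ a₂,
      (Fk K ℓ (x - A ω z) - Fk K ℓ (x - B' z)) with hδ
  have hFkl_meas : Measurable (Fk K ℓ) := (Fk_anti hK0 hKl_int hℓ0).measurable
  have hFkl01 : ∀ t, 0 ≤ Fk K ℓ t ∧ Fk K ℓ t ≤ 1 := fun t =>
    ⟨Fk_nonneg hK0 hℓ0 t, Fk_le_one hK0 hKl_int hKint hℓ0 t⟩
  -- measurability of δ
  have hδmeas : Measurable (fun p : Ω × ℝ => δ p.1 p.2) := by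
    have hsm : StronglyMeasurable (fun q : (Ω × ℝ) × ℝ =>
        Fk K ℓ (q.1.2 - A q.1.1 q.2) - Fk K ℓ (q.1.2 - B' q.2)) := by
      apply Measurable.stronglyMeasurable
      exact ((hFkl_meas.comp ((measurable_fst.snd).sub
          (hAmeas.comp (measurable_fst.fst.prodMk measurable_snd)))).sub
        (hFkl_meas.comp ((measurable_fst.snd).sub (hB'meas.comp measurable_snd))))
    exact hsm.integral_prod_right'.measurable
  -- measurability of the inner difference for fixed ω
  have hAsec : ∀ ω : Ω, Measurable (fun z : ℝ => A ω z) := fun ω =>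
    hAmeas.comp (measurable_const.prodMk measurable_id)
  have hgm : ∀ ω : Ω, Measurable (fun q : ℝ × ℝ =>
      |Fk K ℓ (q.1 - A ω q.2) - Fk K ℓ (q.1 - B' q.2)|) := by
    intro ω
    apply Measurable.abs
    exact ((hFkl_meas.comp (measurable_fst.sub ((hAsec ω).comp measurable_snd))).sub
      (hFkl_meas.comp (measurable_fst.sub (hB'meas.comp measurable_snd))))
  -- integrability over S of the difference
  have hgS_int : ∀ (ω : Ω) (x : ℝ), IntegrableOn
      (fun z => |Fk K ℓ (x - A ω z) - Fk K ℓ (x - B' z)|) S := by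
    intro ω x
    apply Integrable.mono' (g := fun _ => (1:ℝ))
      (integrableOn_const measure_Icc_lt_top.ne)
      ((hgm ω).comp (measurable_const.prodMk measurable_id)).aestronglyMeasurable
    apply Filter.Eventually.of_forall
    intro z
    simp only [Function.comp_apply, id_eq, Real.norm_eq_abs, abs_abs]
    rw [abs_le]
    constructor
    · linarith [(hFkl01 (x - A ω z)).1, (hFkl01 (x - B' z)).2]
    · linarith [(hFkl01 (x - A ω z)).2, (hFkl01 (x - B' z)).1]
  -- pointwise bound |δ ω x| ≤ ∫_S |...|
  have hδ_le : ∀ (ω : Ω) (x : ℝ), |δ ω x|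
      ≤ ∫ z in S, |Fk K ℓ (x - A ω z) - Fk K ℓ (x - B' z)| := by
    intro ω x
    calc |δ ω x| ≤ ∫ z in Set.Ioc a₁ a₂, |Fk K ℓ (x - A ω z) - Fk K ℓ (x - B' z)| := by
          have hn := norm_integral_le_integral_norm (μ := volume.restrict (Set.Ioc a₁ a₂))
            (f := fun z => Fk K ℓ (x - A ω z) - Fk K ℓ (x - B' z))
          simpa [Real.norm_eq_abs] using hn
      _ ≤ _ := by
          apply setIntegral_mono_set (hgS_int ω x)
            (Filter.Eventually.of_forall fun z => abs_nonneg _)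
            (Filter.Eventually.of_forall (fun z hz => Set.Ioc_subset_Icc_self hz))
  -- lintegral form of the bound
  have hof : ∀ (ω : Ω) (x : ℝ), ENNReal.ofReal |δ ω x|
      ≤ ∫⁻ z in S, ENNReal.ofReal |Fk K ℓ (x - A ω z) - Fk K ℓ (x - B' z)| := by
    intro ω x
    calc ENNReal.ofReal |δ ω x|
        ≤ ENNReal.ofReal (∫ z in S, |Fk K ℓ (x - A ω z) - Fk K ℓ (x - B' z)|) :=
          ENNReal.ofReal_le_ofReal (hδ_le ω x)
      _ = _ := ofReal_integral_eq_lintegral_ofReal (hgS_int ω x)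
          (Filter.Eventually.of_forall fun z => abs_nonneg _)
  -- bound on |A - B'|
  have hABd : ∀ ω z, |A ω z - B' z| ≤ c₂ - c₁ := fun ω z => by
    have h1 := hAmem ω z; have h2 := hB'mem z
    rw [abs_le]
    constructor
    · linarith [h1.1, h2.2]
    · linarith [h1.2, h2.1]
  have hABmeas : Measurable (fun p : Ω × ℝ => ENNReal.ofReal |A p.1 p.2 - B' p.2|) :=
    ((hAmeas.sub (hB'meas.comp measurable_snd)).abs).ennreal_ofReal
  set M : ℝ≥0∞ := ∫⁻ ω, ∫⁻ z in S, ENNReal.ofReal |A ω z - B' z| ∂volume ∂P with hM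
  have hMS : M = ∫⁻ z in S, ∫⁻ ω, ENNReal.ofReal |A ω z - B' z| ∂P ∂volume := by
    rw [hM]
    exact lintegral_lintegral_swap hABmeas.aemeasurable
  have hMle : M ≤ ENNReal.ofReal (c₂ - c₁) * volume S := by
    calc M ≤ ∫⁻ _ω, (ENNReal.ofReal (c₂ - c₁) * volume S) ∂P := by
          apply lintegral_mono
          intro ω
          calc (∫⁻ z in S, ENNReal.ofReal |A ω z - B' z| ∂volume)
              ≤ ∫⁻ _z in S, ENNReal.ofReal (c₂ - c₁) ∂volume :=
                lintegral_mono fun z => ENNReal.ofReal_le_ofReal (hABd ω z)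
            _ = ENNReal.ofReal (c₂ - c₁) * volume S := by
                rw [setLIntegral_const]
      _ = _ := by rw [lintegral_const, measure_univ, mul_one]
  have hMne : M ≠ ⊤ := by
    apply ne_top_of_le_ne_top _ hMle
    apply ENNReal.mul_ne_top ENNReal.ofReal_ne_top
    rw [hSdef, Real.volume_Icc]
    exact ENNReal.ofReal_ne_top
  -- the triple lintegral chain
  have htrip : Measurable (fun q : (ℝ × Ω) × ℝ =>
      ENNReal.ofReal |Fk K ℓ (q.1.1 - A q.1.2 q.2) - Fk K ℓ (q.1.1 - B' q.2)|) :=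
    (((hFkl_meas.comp ((measurable_fst.fst).sub
        (hAmeas.comp ((measurable_fst.snd).prodMk measurable_snd)))).sub
      (hFkl_meas.comp ((measurable_fst.fst).sub
        (hB'meas.comp measurable_snd)))).abs).ennreal_ofReal
  have hΦleM : (∫⁻ x, ∫⁻ ω, ENNReal.ofReal |δ ω x| ∂P) ≤ M := by
    have hswap1meas : Measurable (fun p : ℝ × Ω =>
        ∫⁻ z in S, ENNReal.ofReal |Fk K ℓ (p.1 - A p.2 z) - Fk K ℓ (p.1 - B' z)|) :=
      Measurable.lintegral_prod_right' htrip
    have step2 : (∫⁻ x, ∫⁻ ω,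
          (∫⁻ z in S, ENNReal.ofReal |Fk K ℓ (x - A ω z) - Fk K ℓ (x - B' z)|) ∂P)
        = ∫⁻ ω, ∫⁻ x,
          (∫⁻ z in S, ENNReal.ofReal |Fk K ℓ (x - A ω z) - Fk K ℓ (x - B' z)|) ∂volume ∂P := by
      apply lintegral_lintegral_swap
      exact hswap1meas.aemeasurable
    have step3 : ∀ ω : Ω, (∫⁻ x, ∫⁻ z in S,
          ENNReal.ofReal |Fk K ℓ (x - A ω z) - Fk K ℓ (x - B' z)| ∂volume)
        = ∫⁻ z in S, ∫⁻ x,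
          ENNReal.ofReal |Fk K ℓ (x - A ω z) - Fk K ℓ (x - B' z)| ∂volume ∂volume := by
      intro ω
      apply lintegral_lintegral_swap
      exact (((hFkl_meas.comp (measurable_fst.sub ((hAsec ω).comp measurable_snd))).sub
        (hFkl_meas.comp (measurable_fst.sub
          (hB'meas.comp measurable_snd)))).abs).ennreal_ofReal.aemeasurable
    have step4 : ∀ ω : Ω, (∫⁻ z in S, ∫⁻ x,
          ENNReal.ofReal |Fk K ℓ (x - A ω z) - Fk K ℓ (x - B' z)| ∂volume ∂volume)
        ≤ ∫⁻ z in S, ENNReal.ofReal |A ω z - B' z| ∂volume :=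
      fun ω => lintegral_mono fun z => Fk_core hKc hK0 hKl_int hKint hℓ0 (A ω z) (B' z)
    calc (∫⁻ x, ∫⁻ ω, ENNReal.ofReal |δ ω x| ∂P)
        ≤ ∫⁻ x, ∫⁻ ω,
            (∫⁻ z in S, ENNReal.ofReal |Fk K ℓ (x - A ω z) - Fk K ℓ (x - B' z)|) ∂P ∂volume :=
          lintegral_mono fun x => lintegral_mono fun ω => hof ω x
      _ = ∫⁻ ω, ∫⁻ x,
            (∫⁻ z in S, ENNReal.ofReal |Fk K ℓ (x - A ω z) - Fk K ℓ (x - B' z)|) ∂volume ∂P :=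
          step2
      _ = ∫⁻ ω, ∫⁻ z in S, ∫⁻ x,
            ENNReal.ofReal |Fk K ℓ (x - A ω z) - Fk K ℓ (x - B' z)| ∂volume ∂volume ∂P :=
          lintegral_congr step3
      _ ≤ M := lintegral_mono step4
  have hΦne : (∫⁻ x, ∫⁻ ω, ENNReal.ofReal |δ ω x| ∂P) ≠ ⊤ := ne_top_of_le_ne_top hMne hΦleM
  -- the left-hand side is at most M.toReal
  have hsecδ : ∀ x : ℝ, Measurable (fun ω => |δ ω x|) := fun x =>
    (hδmeas.comp (measurable_id.prodMk measurable_const)).abs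
  have hinner : ∀ x, ∫ ω, |δ ω x| ∂P = (∫⁻ ω, ENNReal.ofReal |δ ω x| ∂P).toReal := fun x =>
    integral_eq_lintegral_of_nonneg_ae (Filter.Eventually.of_forall fun ω => abs_nonneg _)
      (hsecδ x).aestronglyMeasurable
  have houter_meas : Measurable (fun x => ∫⁻ ω, ENNReal.ofReal |δ ω x| ∂P) :=
    Measurable.lintegral_prod_right
      (f := fun (x : ℝ) (ω : Ω) => ENNReal.ofReal |δ ω x|)
      ((hδmeas.comp (measurable_snd.prodMk measurable_fst)).abs.ennreal_ofReal)
  have hLHS : (∫ x : ℝ, ∫ ω, |δ ω x| ∂P) ≤ M.toReal := by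
    have e1 : (∫ x : ℝ, ∫ ω, |δ ω x| ∂P)
        = (∫⁻ x, ENNReal.ofReal ((∫⁻ ω, ENNReal.ofReal |δ ω x| ∂P).toReal)).toReal := by
      rw [show (fun x : ℝ => ∫ ω, |δ ω x| ∂P)
          = fun x => (∫⁻ ω, ENNReal.ofReal |δ ω x| ∂P).toReal from funext hinner]
      exact integral_eq_lintegral_of_nonneg_ae
        (Filter.Eventually.of_forall fun x => ENNReal.toReal_nonneg)
        (houter_meas.ennreal_toReal).aestronglyMeasurable
    rw [e1]
    apply ENNReal.toReal_mono hMne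
    calc (∫⁻ x, ENNReal.ofReal ((∫⁻ ω, ENNReal.ofReal |δ ω x| ∂P).toReal))
        ≤ ∫⁻ x, ∫⁻ ω, ENNReal.ofReal |δ ω x| ∂P :=
          lintegral_mono fun x => ENNReal.ofReal_toReal_le
      _ ≤ M := hΦleM
  -- the right-hand side equals M.toReal
  have hsecAB : ∀ z : ℝ, Measurable (fun ω => |A ω z - B' z|) := fun z =>
    ((hAmeas.comp (measurable_id.prodMk measurable_const)).sub measurable_const).abs
  have hν_meas : Measurable (fun z => ∫⁻ ω, ENNReal.ofReal |A ω z - B' z| ∂P) :=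
    Measurable.lintegral_prod_right
      (f := fun (z : ℝ) (ω : Ω) => ENNReal.ofReal |A ω z - B' z|)
      (hABmeas.comp (measurable_snd.prodMk measurable_fst))
  have hν_le : ∀ z, (∫⁻ ω, ENNReal.ofReal |A ω z - B' z| ∂P)
      ≤ ENNReal.ofReal (c₂ - c₁) := fun z => by
    calc (∫⁻ ω, ENNReal.ofReal |A ω z - B' z| ∂P)
        ≤ ∫⁻ _ω, ENNReal.ofReal (c₂ - c₁) ∂P :=
          lintegral_mono fun ω => ENNReal.ofReal_le_ofReal (hABd ω z)
      _ = _ := by rw [lintegral_const, measure_univ, mul_one]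
  have hRHS : (∫ z in S, ∫ ω, |A ω z - B' z| ∂P) = M.toReal := by
    have h1 : ∀ z : ℝ, ∫ ω, |A ω z - B' z| ∂P
        = (∫⁻ ω, ENNReal.ofReal |A ω z - B' z| ∂P).toReal := fun z =>
      integral_eq_lintegral_of_nonneg_ae (Filter.Eventually.of_forall fun ω => abs_nonneg _)
        (hsecAB z).aestronglyMeasurable
    calc (∫ z in S, ∫ ω, |A ω z - B' z| ∂P)
        = ∫ z in S, (∫⁻ ω, ENNReal.ofReal |A ω z - B' z| ∂P).toReal :=
          setIntegral_congr_fun measurableSet_Icc fun z _ => h1 z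
      _ = (∫⁻ z in S, ENNReal.ofReal
            ((∫⁻ ω, ENNReal.ofReal |A ω z - B' z| ∂P).toReal) ∂volume).toReal :=
          integral_eq_lintegral_of_nonneg_ae
            (Filter.Eventually.of_forall fun z => ENNReal.toReal_nonneg)
            (hν_meas.ennreal_toReal).aestronglyMeasurable
      _ = (∫⁻ z in S, ∫⁻ ω, ENNReal.ofReal |A ω z - B' z| ∂P ∂volume).toReal := by
          congr 1
          apply lintegral_congr fun z => ?_
          exact ENNReal.ofReal_toReal (ne_top_of_le_ne_top ENNReal.ofReal_ne_top (hν_le z))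
      _ = M.toReal := by rw [hMS]
  calc (∫ x : ℝ, ∫ ω, |δ ω x| ∂P) ≤ M.toReal := hLHS
    _ = ∫ z in S, ∫ ω, |A ω z - B' z| ∂P := hRHS.symm

set_option maxHeartbeats 2000000 in
theorem stmt8 (l₀ r₀ ε mb : ℝ) (K b b' binv : ℝ → ℝ)
    (hlr : l₀ < r₀) (hε : 0 < ε) (hε1 : ε ≤ 1) (hmb : 0 < mb)
    -- kernel assumptions
    (hK0 : ∀ y, 0 ≤ K y) (hK2 : ContDiff ℝ 2 K) (hKsymm : ∀ y, K (-y) = K y)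
    (hKsupp : ∀ y, 1 < |y| → K y = 0) (hKint : ∫ y, K y = 1)
    -- `b` is continuously differentiable on `I_{2ε}` with `b' ≤ -mb` there
    (hbd : ∀ x ∈ Set.Icc (l₀ - 2 * ε) (r₀ + 2 * ε), HasDerivAt b (b' x) x)
    (hb'c : ContinuousOn b' (Set.Icc (l₀ - 2 * ε) (r₀ + 2 * ε)))
    (hb'le : ∀ x ∈ Set.Icc (l₀ - 2 * ε) (r₀ + 2 * ε), b' x ≤ -mb)
    -- `binv` is the inverse of `b` on `I_{2ε}`
    (hbinv : ∀ x ∈ Set.Icc (l₀ - 2 * ε) (r₀ + 2 * ε), binv (b x) = x)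
    -- the probability space and the estimator `b̂`
    (Ω : Type) [MeasurableSpace Ω] (P : Measure Ω) [IsProbabilityMeasure P]
    (bhat : Ω → ℝ → ℝ) (hbhat : Measurable (Function.uncurry bhat))
    (hsq : ∀ x ∈ Set.Icc (l₀ - 2 * ε) (r₀ + 2 * ε),
      Integrable (fun ω => |bhat ω x - b x| ^ 2) P)
    -- the bandwidths
    (ℓ h : ℝ) (hℓ0 : 0 < ℓ) (hℓ1 : ℓ ≤ 1) (hh0 : 0 < h) (hh1 : h ≤ 1) :
    (∫ x : ℝ, ∫ ω,
        |∫ z in (b (r₀ + ε))..(b (l₀ - ε)), ∫ y in Set.Iic (-x),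
            (Kh K ℓ (-(binvEst K l₀ r₀ ε h (bhat ω) z) - y)
              - Kh K ℓ (-(binv z) - y))| ∂P) ≤
      ∫ z in Set.Icc (b (r₀ + ε)) (b (l₀ - ε)),
        ∫ ω, |binvEst K l₀ r₀ ε h (bhat ω) z - binv z| ∂P := by
  have hKc : Continuous K := hK2.continuous
  have hKl_int : Integrable (Kh K ℓ) := Kh_integrable hKc hKsupp hℓ0
  have hKh_int : Integrable (Kh K h) := Kh_integrable hKc hKsupp hh0
  set I2 : Set ℝ := Set.Icc (l₀ - 2*ε) (r₀ + 2*ε) with hI2def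
  have hI2 : Set.Icc (l₀ - 2 * ε) (r₀ + 2 * ε) = I2 := rfl
  -- continuity / monotonicity of b
  have hbc : ContinuousOn b I2 := fun x hx => ((hbd x hx).continuousAt).continuousWithinAt
  have hbsa : StrictAntiOn b I2 := by
    apply strictAntiOn_of_deriv_neg (convex_Icc _ _) hbc
    intro x hx
    rw [interior_Icc] at hx
    rw [(hbd x (Set.Ioo_subset_Icc_self hx)).deriv]
    linarith [hb'le x (Set.Ioo_subset_Icc_self hx)]
  have hmem1 : l₀ - ε ∈ I2 := ⟨by linarith, by linarith⟩
  have hmem2 : r₀ + ε ∈ I2 := ⟨by linarith, by linarith⟩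
  have ha12 : b (r₀ + ε) ≤ b (l₀ - ε) := (hbsa hmem1 hmem2 (by linarith)).le
  set a₁ : ℝ := b (r₀ + ε) with ha₁
  set a₂ : ℝ := b (l₀ - ε) with ha₂
  set S : Set ℝ := Set.Icc a₁ a₂ with hSdef
  -- the monotone inverse `B'` agreeing with `binv` on `S`
  set T : ℝ → Set ℝ :=
    fun z => insert (l₀ - ε) {x | x ∈ Set.Icc (l₀-ε) (r₀+ε) ∧ z ≤ b x} with hT
  set B' : ℝ → ℝ := fun z => sSup (T z) with hB'
  have hTsub : ∀ z, T z ⊆ Set.Icc (l₀-ε) (r₀+ε) := by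
    intro z w hw
    rcases hw with rfl | hw
    · exact ⟨le_refl _, by linarith⟩
    · exact hw.1
  have hTne : ∀ z, (T z).Nonempty := fun z => ⟨l₀ - ε, Set.mem_insert _ _⟩
  have hTbdd : ∀ z, BddAbove (T z) := fun z => ⟨r₀ + ε, fun w hw => (hTsub z hw).2⟩
  have hB'anti : Antitone B' := by
    intro z1 z2 h12
    apply csSup_le_csSup (hTbdd z1) (hTne z2)
    rintro w (rfl | hw)
    · exact Set.mem_insert _ _
    · exact Set.mem_insert_of_mem _ ⟨hw.1, le_trans h12 hw.2⟩
  have hB'meas : Measurable B' := hB'anti.measurable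
  have hB'mem : ∀ z, B' z ∈ Set.Icc (l₀-ε) (r₀+ε) := fun z =>
    ⟨le_csSup (hTbdd z) (Set.mem_insert _ _), csSup_le (hTne z) (fun w hw => (hTsub z hw).2)⟩
  have hB'eq : ∀ z ∈ S, B' z = binv z := by
    intro z hz
    obtain ⟨x, hx, hbx⟩ := intermediate_value_Icc' (by linarith : l₀ - ε ≤ r₀ + ε)
      (hbc.mono (Set.Icc_subset_Icc (by linarith) (by linarith))) hz
    have hxI2 : x ∈ I2 := ⟨by linarith [hx.1], by linarith [hx.2]⟩
    have hTz : T z = Set.Icc (l₀ - ε) x := by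
      ext w
      constructor
      · rintro (rfl | hw)
        · exact ⟨le_refl _, hx.1⟩
        · refine ⟨hw.1.1, ?_⟩
          by_contra hcon
          push_neg at hcon
          have hwI2 : w ∈ I2 := ⟨by linarith [hw.1.1], by linarith [hw.1.2]⟩
          have hlt := hbsa hxI2 hwI2 hcon
          rw [hbx] at hlt; linarith [hw.2]
      · intro hw
        rcases eq_or_lt_of_le hw.2 with rfl | hlt
        · exact Or.inr ⟨⟨hw.1, hx.2⟩, hbx.ge⟩
        · have hwI2 : w ∈ I2 := ⟨by linarith [hw.1], by linarith [hlt, hx.2]⟩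
          refine Or.inr ⟨⟨hw.1, by linarith [hx.2]⟩, ?_⟩
          have hgt := hbsa hwI2 hxI2 hlt
          rw [hbx] at hgt; linarith
    rw [hB']
    simp only [hTz]
    rw [csSup_Icc hx.1, ← hbx, hbinv x hxI2]
  clear hsq hb'c hKsymm
  -- facts about the estimator binvEst K l₀ r₀ ε h (bhat ω) z = binvEst K l₀ r₀ ε h (bhat ω) z
  have hbm : ∀ ω, Measurable (bhat ω) := fun ω => hbhat.of_uncurry_left
  have hFkh_meas : Measurable (Fk K h) := (Fk_anti hK0 hKh_int hh0).measurable
  have hFkl_meas : Measurable (Fk K ℓ) := (Fk_anti hK0 hKl_int hℓ0).measurable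
  have hAeq : ∀ (g : ℝ → ℝ) (z : ℝ), binvEst K l₀ r₀ ε h g z
      = (l₀ - 2*ε) + ∫ u in I2, Fk K h (z - g u) := by
    intro g z
    rw [binvEst, hI2]
    congr 1
    apply setIntegral_congr_fun measurableSet_Icc
    intro u _
    have key := shift_Iic (Kh K h) (-z) (-(g u))
    rw [show -(g u) - (-z) = z - g u by ring] at key
    show (∫ y in Set.Iic (-z), Kh K h (-(g u) - y)) = Fk K h (z - g u)
    rw [key]; rfl
  have hAmeas : Measurable (fun p : Ω × ℝ => binvEst K l₀ r₀ ε h (bhat p.1) p.2) := by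
    have he : (fun p : Ω × ℝ => binvEst K l₀ r₀ ε h (bhat p.1) p.2)
        = fun p => (l₀ - 2*ε) + ∫ u in I2, Fk K h (p.2 - bhat p.1 u) := by
      ext p; exact hAeq (bhat p.1) p.2
    rw [he]
    apply Measurable.add measurable_const
    have hsm : StronglyMeasurable (fun q : (Ω × ℝ) × ℝ => Fk K h (q.1.2 - bhat q.1.1 q.2)) :=
      (hFkh_meas.comp ((measurable_fst.snd).sub
        (hbhat.comp (measurable_fst.fst.prodMk measurable_snd)))).stronglyMeasurable
    exact hsm.integral_prod_right'.measurable
  have hAmem : ∀ (ω : Ω) (z : ℝ),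
      binvEst K l₀ r₀ ε h (bhat ω) z ∈ Set.Icc (l₀ - 2*ε) (r₀ + 2*ε) := by
    intro ω z
    have hFmeas : Measurable (fun u => Fk K h (z - bhat ω u)) :=
      hFkh_meas.comp (measurable_const.sub (hbm ω))
    have hIntF : IntegrableOn (fun u => Fk K h (z - bhat ω u)) I2 := by
      apply Integrable.mono' (g := fun _ => (1:ℝ))
        (integrableOn_const measure_Icc_lt_top.ne)
        hFmeas.aestronglyMeasurable
      apply Filter.Eventually.of_forall
      intro u
      rw [Real.norm_eq_abs, abs_of_nonneg (Fk_nonneg hK0 hh0 _)]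
      exact Fk_le_one hK0 hKh_int hKint hh0 _
    rw [hAeq]
    constructor
    · have h0 : 0 ≤ ∫ u in I2, Fk K h (z - bhat ω u) :=
        setIntegral_nonneg measurableSet_Icc (fun u _ => Fk_nonneg hK0 hh0 _)
      linarith
    · have hle : ∫ u in I2, Fk K h (z - bhat ω u) ≤ ∫ _u in I2, (1:ℝ) := by
        apply setIntegral_mono_on hIntF
          (integrableOn_const measure_Icc_lt_top.ne) measurableSet_Icc
        exact fun u _ => Fk_le_one hK0 hKh_int hKint hh0 _
      rw [setIntegral_const, smul_eq_mul, mul_one, hI2def,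
        Real.volume_real_Icc_of_le (by linarith)] at hle
      linarith
  -- pointwise rewriting of the inner double integral
  have hgoalL : ∀ (ω : Ω) (x : ℝ), (∫ z in a₁..a₂, ∫ y in Set.Iic (-x),
      (Kh K ℓ (-(binvEst K l₀ r₀ ε h (bhat ω) z) - y) - Kh K ℓ (-(binv z) - y)))
      = ∫ z in Set.Ioc a₁ a₂,
        (Fk K ℓ (x - binvEst K l₀ r₀ ε h (bhat ω) z) - Fk K ℓ (x - B' z)) := by
    intro ω x
    rw [intervalIntegral.integral_of_le ha12]
    apply setIntegral_congr_fun measurableSet_Ioc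
    intro z hz
    have hzS : z ∈ S := Set.Ioc_subset_Icc_self hz
    have h1 : Integrable (fun y => Kh K ℓ (-(binvEst K l₀ r₀ ε h (bhat ω) z) - y)) := hKl_int.comp_sub_left _
    have h2 : Integrable (fun y => Kh K ℓ (-(binv z) - y)) := hKl_int.comp_sub_left _
    show (∫ y in Set.Iic (-x),
        (Kh K ℓ (-(binvEst K l₀ r₀ ε h (bhat ω) z) - y) - Kh K ℓ (-(binv z) - y)))
      = Fk K ℓ (x - binvEst K l₀ r₀ ε h (bhat ω) z) - Fk K ℓ (x - B' z)
    rw [integral_sub h1.integrableOn h2.integrableOn]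
    have k1 := shift_Iic (Kh K ℓ) (-x) (-(binvEst K l₀ r₀ ε h (bhat ω) z))
    have k2 := shift_Iic (Kh K ℓ) (-x) (-(binv z))
    rw [show -(binvEst K l₀ r₀ ε h (bhat ω) z) - (-x) = x - binvEst K l₀ r₀ ε h (bhat ω) z by ring] at k1
    rw [show -(binv z) - (-x) = x - binv z by ring] at k2
    rw [k1, k2, ← hB'eq z hzS]
    rfl
  -- conclude via the abstract lemma
  have key := main_aux P hKc hK0 hKl_int hKint hℓ0
    (fun ω z => binvEst K l₀ r₀ ε h (bhat ω) z) B' a₁ a₂ (l₀ - 2*ε) (r₀ + 2*ε)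
    ha12 (by linarith) hAmeas hB'meas hAmem
    (fun z => ⟨by linarith [(hB'mem z).1], by linarith [(hB'mem z).2]⟩)
  calc (∫ x : ℝ, ∫ ω,
        |∫ z in a₁..a₂, ∫ y in Set.Iic (-x),
            (Kh K ℓ (-(binvEst K l₀ r₀ ε h (bhat ω) z) - y)
              - Kh K ℓ (-(binv z) - y))| ∂P)
      = ∫ x : ℝ, ∫ ω, |∫ z in Set.Ioc a₁ a₂,
          (Fk K ℓ (x - binvEst K l₀ r₀ ε h (bhat ω) z) - Fk K ℓ (x - B' z))| ∂P := by
        congr 1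
        funext x
        congr 1
        funext ω
        rw [hgoalL ω x]
    _ ≤ ∫ z in Set.Icc a₁ a₂, ∫ ω, |binvEst K l₀ r₀ ε h (bhat ω) z - B' z| ∂P := key
    _ = ∫ z in S, ∫ ω, |binvEst K l₀ r₀ ε h (bhat ω) z - binv z| ∂P := by
        apply setIntegral_congr_fun measurableSet_Icc
        intro z hz
        show (∫ ω, |binvEst K l₀ r₀ ε h (bhat ω) z - B' z| ∂P)
          = ∫ ω, |binvEst K l₀ r₀ ε h (bhat ω) z - binv z| ∂P
        rw [hB'eq z hz]
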